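/- Let (W,S) be an irreducible infinite Coxeter system, s ∈ S, and I = S ∖ {s}. Then the set N_I = {w ∈ W | w·Π_I = Π_I} is trivial, and consequently the normalizer of W_I in W equals W_I itself. -/

import Mathlib

/-- The standard bilinear form of a Coxeter matrix on `B →₀ ℝ`:
`⟨α_s, α_t⟩ = -cos (π / m(s,t))`, interpreted as `-1` when `m(s,t) = ∞`
(encoded as `0`). -/
noncomputable def cForm {B : Type*} (M : CoxeterMatrix B) (v w : B →₀ ℝ) : ℝ :=
  v.sum fun s c => w.sum fun t d =>
    c * d * (if M s t = 0 then -1 else -Real.cos (Real.pi / (M s t : ℝ)))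

/-- The simple root `α_s` as a basis vector of `B →₀ ℝ`. -/
noncomputable def simpleRoot {B : Type*} (s : B) : B →₀ ℝ := Finsupp.single s 1

namespace Stmt14

variable {B : Type*} (M : CoxeterMatrix B)

/-- form coefficients -/
noncomputable def kk (a b : B) : ℝ :=
  if M a b = 0 then -1 else -Real.cos (Real.pi / (M a b : ℝ))

lemma kk_diag (a : B) : kk M a a = 1 := by
  simp [kk, M.diagonal a]

lemma kk_symm (a b : B) : kk M a b = kk M b a := by
  simp [kk, M.symmetric a b]

lemma kk_nonpos {a b : B} (h : a ≠ b) : kk M a b ≤ 0 := by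
  unfold kk
  split_ifs with h0
  · norm_num
  · have h1 : M a b ≠ 1 := M.off_diagonal a b h
    have h2 : (2 : ℕ) ≤ M a b := by omega
    have hpos : (0:ℝ) < (M a b : ℝ) := by exact_mod_cast Nat.pos_of_ne_zero h0
    have : Real.pi / (M a b : ℝ) ≤ Real.pi / 2 := by
      apply div_le_div_of_nonneg_left Real.pi_pos.le (by norm_num)
      exact_mod_cast h2
    have := Real.cos_nonneg_of_mem_Icc (x := Real.pi / (M a b : ℝ))
      ⟨by linarith [div_nonneg Real.pi_pos.le (Nat.cast_nonneg (M.M a b))], this⟩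
    linarith

lemma kk_le_neg_half {a b : B} (h : a ≠ b) (h2 : M a b ≠ 2) : kk M a b ≤ -(1/2) := by
  unfold kk
  split_ifs with h0
  · norm_num
  · have h1 : M a b ≠ 1 := M.off_diagonal a b h
    have h3 : (3 : ℕ) ≤ M a b := by omega
    have hpos : (0:ℝ) < (M a b : ℝ) := by exact_mod_cast Nat.pos_of_ne_zero h0
    have hle : Real.pi / (M a b : ℝ) ≤ Real.pi / 3 := by
      apply div_le_div_of_nonneg_left Real.pi_pos.le (by norm_num)
      exact_mod_cast h3
    have hcos : Real.cos (Real.pi / 3) ≤ Real.cos (Real.pi / (M a b : ℝ)) := by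
      apply Real.cos_le_cos_of_nonneg_of_le_pi (by positivity) ?_ hle
      calc Real.pi / 3 ≤ Real.pi / 1 := by
            apply div_le_div_of_nonneg_left Real.pi_pos.le (by norm_num) (by norm_num)
      _ = Real.pi := by ring
    rw [Real.cos_pi_div_three] at hcos
    linarith

/-- The bilinear form, bundled. -/
noncomputable def BF : (B →₀ ℝ) →ₗ[ℝ] (B →₀ ℝ) →ₗ[ℝ] ℝ :=
  Finsupp.lsum ℝ fun a => LinearMap.toSpanSingleton ℝ _
    (Finsupp.lsum ℝ fun b => LinearMap.toSpanSingleton ℝ ℝ (kk M a b))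

lemma BF_single_single (a b : B) (c d : ℝ) :
    BF M (Finsupp.single a c) (Finsupp.single b d) = c * d * kk M a b := by
  simp [BF, Finsupp.lsum_single, LinearMap.toSpanSingleton_apply, smul_eq_mul]
  ring

lemma BF_comm (v w : B →₀ ℝ) : BF M v w = BF M w v := by
  induction v using Finsupp.induction_linear with
  | zero => simp
  | add f g hf hg => simp [map_add, hf, hg]
  | single a c =>
    induction w using Finsupp.induction_linear with
    | zero => simp
    | add f g hf hg => simp [map_add, hf, hg]
    | single b d => rw [BF_single_single, BF_single_single, kk_symm]; ring

lemma cForm_simpleRoot (a : B) (v : B →₀ ℝ) :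
    cForm M (simpleRoot a) v = BF M (simpleRoot a) v := by
  unfold cForm simpleRoot
  rw [Finsupp.sum_single_index (by exact Finset.sum_eq_zero fun b _ => by ring)]
  rw [show (BF M (Finsupp.single a 1) v) =
        (Finsupp.lsum ℝ fun b => LinearMap.toSpanSingleton ℝ ℝ (kk M a b)) v by
      simp [BF, Finsupp.lsum_single]]
  rw [Finsupp.lsum_apply]
  apply Finsupp.sum_congr
  intro b _
  simp [LinearMap.toSpanSingleton_apply, smul_eq_mul, kk]
  try ring

lemma BF_simpleRoot_self (a : B) : BF M (simpleRoot a) (simpleRoot a) = 1 := by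
  rw [simpleRoot, BF_single_single, kk_diag]; ring

lemma BF_simpleRoot_apply (a : B) (v : B →₀ ℝ) :
    BF M (simpleRoot a) v = v.sum fun b d => d * kk M a b := by
  rw [show (BF M (simpleRoot a) v) =
      (Finsupp.lsum ℝ fun b => LinearMap.toSpanSingleton ℝ ℝ (kk M a b)) v by
    simp [BF, simpleRoot, Finsupp.lsum_single]]
  rw [Finsupp.lsum_apply]
  apply Finsupp.sum_congr
  intro b _
  simp [LinearMap.toSpanSingleton_apply, smul_eq_mul]

end Stmt14

namespace Stmt14

/-- positivity of a vector -/
def Pos {B : Type*} (v : B →₀ ℝ) : Prop := v ≠ 0 ∧ ∀ b, 0 ≤ v b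

/-- negativity of a vector -/
def Neg {B : Type*} (v : B →₀ ℝ) : Prop := v ≠ 0 ∧ ∀ b, v b ≤ 0

lemma pos_simpleRoot {B : Type*} (a : B) : Pos (simpleRoot a) := by
  constructor
  · simp [simpleRoot, Finsupp.single_eq_zero]
  · intro b
    classical
    rw [simpleRoot, Finsupp.single_apply]
    split_ifs <;> norm_num

lemma not_pos_and_neg {B : Type*} {v : B →₀ ℝ} (h1 : Pos v) (h2 : Neg v) : False := by
  apply h1.1
  ext b
  have := h1.2 b
  have := h2.2 b
  simp only [Finsupp.coe_zero, Pi.zero_apply]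
  linarith

lemma neg_iff_pos_neg {B : Type*} {v : B →₀ ℝ} : Neg v ↔ Pos (-v) := by
  constructor
  · rintro ⟨h1, h2⟩
    exact ⟨by simpa using h1, fun b => by simpa using h2 b⟩
  · rintro ⟨h1, h2⟩
    exact ⟨by simpa using h1, fun b => by simpa using h2 b⟩

section Rep

variable {B W : Type*} [Group W] {M : CoxeterMatrix B} (cs : CoxeterSystem M W)
  (ρ : W →* ((B →₀ ℝ) ≃ₗ[ℝ] (B →₀ ℝ)))
  (hρ : ∀ (a : B) (v : B →₀ ℝ),
    ρ (cs.simple a) v = v - (2 * cForm M (simpleRoot a) v) • simpleRoot a)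

include hρ

lemma refl_apply (a : B) (v : B →₀ ℝ) :
    ρ (cs.simple a) v = v - (2 * BF M (simpleRoot a) v) • simpleRoot a := by
  rw [hρ, cForm_simpleRoot]

omit hρ in
lemma rho_mul_apply (w w' : W) (v : B →₀ ℝ) : ρ (w * w') v = ρ w (ρ w' v) := by
  rw [map_mul]; rfl

omit hρ in
lemma expand_apply (w : W) (x : B →₀ ℝ) :
    ρ w x = x.sum fun t c => c • (ρ w (simpleRoot t)) := by
  conv_lhs => rw [← Finsupp.sum_single x]
  rw [map_finsuppSum]
  apply Finsupp.sum_congr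
  intro t _
  rw [show Finsupp.single t (x t) = (x t) • simpleRoot t by
    rw [simpleRoot, Finsupp.smul_single, smul_eq_mul, mul_one]]
  rw [map_smul]

lemma refl_invariant (a : B) (x y : B →₀ ℝ) :
    BF M (ρ (cs.simple a) x) (ρ (cs.simple a) y) = BF M x y := by
  have h1 : BF M x (simpleRoot a) = BF M (simpleRoot a) x := BF_comm M _ _
  simp only [refl_apply cs ρ hρ, map_sub, map_smul, LinearMap.sub_apply,
    LinearMap.smul_apply, smul_eq_mul, BF_simpleRoot_self, h1]
  ring

lemma rep_invariant (w : W) : ∀ (x y : B →₀ ℝ),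
    BF M (ρ w x) (ρ w y) = BF M x y := by
  induction w using cs.simple_induction with
  | simple i => exact refl_invariant cs ρ hρ i
  | one => simp
  | mul w w' hw hw' =>
    intro x y
    rw [rho_mul_apply ρ, rho_mul_apply ρ, hw, hw']

/-- root predicate -/
def IsRt (β : B →₀ ℝ) : Prop := ∃ (v : W) (t : B), β = ρ v (simpleRoot t)

omit hρ in
lemma isRt_simpleRoot (t : B) : IsRt ρ (simpleRoot t) := ⟨1, t, by simp⟩

lemma bf_root {β : B →₀ ℝ} (h : IsRt ρ β) : BF M β β = 1 := by
  obtain ⟨v, t, rfl⟩ := h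
  rw [rep_invariant cs ρ hρ, BF_simpleRoot_self]

omit hρ in
lemma isRt_apply {β : B →₀ ℝ} (h : IsRt ρ β) (w : W) : IsRt ρ (ρ w β) := by
  obtain ⟨v, t, rfl⟩ := h
  exact ⟨w * v, t, by rw [map_mul]; rfl⟩

omit hρ in
lemma refl_apply_ne {a b : B} (hne : b ≠ a) (v : B →₀ ℝ) (hv : ρ (cs.simple a) v = v - (2 * BF M (simpleRoot a) v) • simpleRoot a) :
    (ρ (cs.simple a) v) b = v b := by
  rw [hv]
  have h0 : (Finsupp.single a (1:ℝ)) b = 0 :=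
    Finsupp.single_eq_of_ne (fun h => hne h)
  rw [Finsupp.sub_apply, Finsupp.smul_apply, simpleRoot, h0, smul_zero, sub_zero]

end Rep

end Stmt14

namespace Stmt14

open CoxeterSystem

section Dihedral

variable {B W : Type*} [Group W] {M : CoxeterMatrix B} (cs : CoxeterSystem M W)
  (ρ : W →* ((B →₀ ℝ) ≃ₗ[ℝ] (B →₀ ℝ)))
  (hρ : ∀ (a : B) (v : B →₀ ℝ),
    ρ (cs.simple a) v = v - (2 * cForm M (simpleRoot a) v) • simpleRoot a)

local prefix:100 "s" => cs.simple
local prefix:100 "π" => cs.wordProd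

/-- Any word in two letters has the same product as some alternating word of
bounded length and the same parity. -/
lemma dihedral_word_reduce {a b : B} (hab : a ≠ b) (ω : List B)
    (hω : ∀ c ∈ ω, c = a ∨ c = b) :
    ∃ k ≤ ω.length, k % 2 = ω.length % 2 ∧
      (π ω = π (alternatingWord a b k) ∨ π ω = π (alternatingWord b a k)) := by
  induction ω with
  | nil => exact ⟨0, by simp, by simp, Or.inl rfl⟩
  | cons c ω ih =>
    obtain ⟨k, hk, hpar, hcase⟩ := ih (fun x hx => hω x (List.mem_cons_of_mem c hx))
    have hc : c = a ∨ c = b := hω c List.mem_cons_self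
    have step : ∀ (x y : B), x ≠ y → (c = x ∨ c = y) →
        π ω = π (alternatingWord x y k) →
        ∃ k' ≤ ω.length + 1, k' % 2 = (ω.length + 1) % 2 ∧
          (π (c :: ω) = π (alternatingWord x y k') ∨
           π (c :: ω) = π (alternatingWord y x k')) := by
      intro x y hxy hcxy hπ
      rw [wordProd_cons, hπ]
      by_cases hhead : c = (if Even k then y else x)
      · refine ⟨k + 1, by omega, by omega, Or.inl ?_⟩
        rw [alternatingWord_succ', wordProd_cons, ← hhead]
      · have hc2 : c = (if Even k then x else y) := by
          by_cases h : Even k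
          · rcases hcxy with h' | h'
            · rwa [if_pos h]
            · exfalso; apply hhead; rwa [if_pos h]
          · rcases hcxy with h' | h'
            · exfalso; apply hhead; rwa [if_neg h]
            · rwa [if_neg h]
        rcases k with _ | k''
        · refine ⟨1, by omega, by omega, ?_⟩
          have hca : c = x := by simpa using hc2
          subst hca
          right
          rw [show alternatingWord y c 1 = [c] from rfl]
          simp [wordProd, alternatingWord]
        · refine ⟨k'', by omega, by omega, Or.inl ?_⟩
          rw [alternatingWord_succ', wordProd_cons, ← mul_assoc]
          have hc3 : c = (if Even k'' then y else x) := by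
            by_cases h : Even k''
            · have h2 : ¬ Even (k''+1) := by simp [Nat.even_add_one, h]
              rw [if_neg h2] at hc2
              rw [if_pos h]; exact hc2
            · have h2 : Even (k''+1) := by simp [Nat.even_add_one, h]
              rw [if_pos h2] at hc2
              rw [if_neg h]; exact hc2
          rw [← hc3, cs.simple_mul_simple_self, one_mul]
    rcases hcase with hπ | hπ
    · exact step a b hab hc hπ
    · obtain ⟨k', h1, h2, h3⟩ := step b a hab.symm hc.symm hπ
      exact ⟨k', h1, h2, h3.symm⟩

include hρ

lemma refl_simpleRoot_self (h : B) :
    ρ (s h) (simpleRoot h) = - simpleRoot h := by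
  rw [refl_apply cs ρ hρ, BF_simpleRoot_self]
  module

lemma refl_simpleRoot_ne (h x : B) :
    ρ (s h) (simpleRoot x) = simpleRoot x - (2 * kk M h x) • simpleRoot h := by
  rw [refl_apply cs ρ hρ]
  congr 2
  rw [simpleRoot, simpleRoot, BF_single_single, one_mul, one_mul]

/-- Explicit form of the action of an alternating word on `α_a`, infinite case. -/
lemma altword_apply_inf {a b : B} (hab : a ≠ b) (hm : M a b = 0) (k : ℕ) :
    ρ (π (alternatingWord a b k)) (simpleRoot a)
      = ((k : ℝ) + 1) • simpleRoot (if Even k then a else b)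
        + (k : ℝ) • simpleRoot (if Even k then b else a) := by
  induction k with
  | zero =>
    rw [show alternatingWord a b 0 = ([] : List B) from rfl, wordProd_nil, map_one]
    simp
  | succ k ih =>
    rw [alternatingWord_succ', wordProd_cons, rho_mul_apply, ih]
    have hmba : M b a = 0 := by rw [M.symmetric]; exact hm
    have hkkab : kk M a b = -1 := by simp [kk, hm]
    have hkkba : kk M b a = -1 := by simp [kk, hmba]
    by_cases h : Even k
    · -- head letter is b
      simp only [h, if_true, Nat.even_add_one, not_true, if_false]
      rw [map_add, map_smul, map_smul, refl_simpleRoot_self cs ρ hρ,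
        refl_simpleRoot_ne cs ρ hρ, hkkba]
      push_cast
      module
    · simp only [h, if_false, Nat.even_add_one, not_false_iff, if_true]
      rw [map_add, map_smul, map_smul, refl_simpleRoot_self cs ρ hρ,
        refl_simpleRoot_ne cs ρ hρ, hkkab]
      push_cast
      module

/-- Explicit form of the action of an alternating word on `α_a`, finite case. -/
lemma altword_apply_fin {a b : B} (hab : a ≠ b) (hm : M a b ≠ 0) (k : ℕ) :
    Real.sin (Real.pi / (M a b : ℝ)) • (ρ (π (alternatingWord a b k)) (simpleRoot a))
      = Real.sin (((k : ℝ) + 1) * (Real.pi / (M a b : ℝ)))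
          • simpleRoot (if Even k then a else b)
        + Real.sin ((k : ℝ) * (Real.pi / (M a b : ℝ)))
          • simpleRoot (if Even k then b else a) := by
  set θ := Real.pi / (M a b : ℝ) with hθ
  induction k with
  | zero =>
    rw [show alternatingWord a b 0 = ([] : List B) from rfl, wordProd_nil, map_one]
    simp
  | succ k ih =>
    have hmba : M b a = M a b := M.symmetric b a
    have hkkab : kk M a b = -Real.cos θ := by simp [kk, hm, hθ]
    have hkkba : kk M b a = -Real.cos θ := by simp [kk, hmba, hm, hθ]
    have htrig : Real.sin (((k:ℝ) + 1 + 1) * θ)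
        = 2 * Real.cos θ * Real.sin (((k:ℝ) + 1) * θ) - Real.sin ((k:ℝ) * θ) := by
      have h1 := Real.sin_add (((k:ℝ) + 1) * θ) θ
      have h2 := Real.sin_sub (((k:ℝ) + 1) * θ) θ
      have e1 : ((k:ℝ) + 1 + 1) * θ = ((k:ℝ) + 1) * θ + θ := by ring
      have e2 : ((k:ℝ) : ℝ) * θ = ((k:ℝ) + 1) * θ - θ := by ring
      rw [e1, e2, h1, h2]
      ring
    rw [alternatingWord_succ', wordProd_cons, rho_mul_apply, ← map_smul, ih]
    by_cases h : Even k
    · simp only [h, if_true, Nat.even_add_one, not_true, if_false]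
      rw [map_add, map_smul, map_smul, refl_simpleRoot_self cs ρ hρ,
        refl_simpleRoot_ne cs ρ hρ, hkkba]
      push_cast
      rw [htrig]
      module
    · simp only [h, if_false, Nat.even_add_one, not_false_iff, if_true]
      rw [map_add, map_smul, map_smul, refl_simpleRoot_self cs ρ hρ,
        refl_simpleRoot_ne cs ρ hρ, hkkab]
      push_cast
      rw [htrig]
      module

/-- The cone lemma: an alternating word of admissible length sends `α_a` into the
nonnegative cone spanned by `α_a, α_b` (up to a positive scalar). -/
lemma altword_cone {a b : B} (hab : a ≠ b) (k : ℕ) (hk : M a b = 0 ∨ k < M a b) :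
    ∃ c p q : ℝ, 0 < c ∧ 0 ≤ p ∧ 0 ≤ q ∧
      c • ρ (π (alternatingWord a b k)) (simpleRoot a)
        = p • simpleRoot a + q • simpleRoot b := by
  rcases hk with hm | hk
  · by_cases h : Even k
    · refine ⟨1, (k : ℝ) + 1, (k : ℝ), one_pos, by positivity, by positivity, ?_⟩
      rw [one_smul, altword_apply_inf cs ρ hρ hab hm k, if_pos h, if_pos h]
    · refine ⟨1, (k : ℝ), (k : ℝ) + 1, one_pos, by positivity, by positivity, ?_⟩
      rw [one_smul, altword_apply_inf cs ρ hρ hab hm k, if_neg h, if_neg h, add_comm]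
  · have hm : M a b ≠ 0 := by omega
    have hm2 : (2 : ℕ) ≤ M a b := by
      have := M.off_diagonal a b hab; omega
    set θ := Real.pi / (M a b : ℝ) with hθ
    have hmpos : (0:ℝ) < (M a b : ℝ) := by exact_mod_cast Nat.pos_of_ne_zero hm
    have hθpos : 0 < θ := by rw [hθ]; positivity
    have hθle : θ ≤ Real.pi / 2 := by
      rw [hθ]
      apply div_le_div_of_nonneg_left Real.pi_pos.le (by norm_num)
      exact_mod_cast hm2
    have hθlt : θ < Real.pi := lt_of_le_of_lt hθle (by linarith [Real.pi_pos])
    have hsθ : 0 < Real.sin θ := Real.sin_pos_of_pos_of_lt_pi hθpos hθlt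
    have hsin1 : 0 ≤ Real.sin (((k:ℝ) + 1) * θ) := by
      apply Real.sin_nonneg_of_nonneg_of_le_pi (by positivity)
      have hkm : ((k:ℝ)+1) ≤ (M a b : ℝ) := by exact_mod_cast hk
      calc ((k:ℝ)+1) * θ = (((k:ℝ)+1)/(M a b : ℝ)) * Real.pi := by rw [hθ]; ring
      _ ≤ 1 * Real.pi := by
          apply mul_le_mul_of_nonneg_right _ Real.pi_pos.le
          rw [div_le_one hmpos]; exact hkm
      _ = Real.pi := one_mul _
    have hsin0 : 0 ≤ Real.sin ((k:ℝ) * θ) := by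
      apply Real.sin_nonneg_of_nonneg_of_le_pi (by positivity)
      have hkm : ((k:ℝ)) ≤ (M a b : ℝ) := by exact_mod_cast hk.le
      calc ((k:ℝ)) * θ = (((k:ℝ))/(M a b : ℝ)) * Real.pi := by rw [hθ]; ring
      _ ≤ 1 * Real.pi := by
          apply mul_le_mul_of_nonneg_right _ Real.pi_pos.le
          rw [div_le_one hmpos]; exact hkm
      _ = Real.pi := one_mul _
    have hform := altword_apply_fin cs ρ hρ hab hm k
    rw [← hθ] at hform
    by_cases h : Even k
    · refine ⟨Real.sin θ, Real.sin (((k:ℝ) + 1) * θ), Real.sin ((k:ℝ) * θ),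
        hsθ, hsin1, hsin0, ?_⟩
      rw [hform, if_pos h, if_pos h]
    · refine ⟨Real.sin θ, Real.sin ((k:ℝ) * θ), Real.sin (((k:ℝ) + 1) * θ),
        hsθ, hsin0, hsin1, ?_⟩
      rw [hform, if_neg h, if_neg h, add_comm]

end Dihedral

end Stmt14

namespace Stmt14

open CoxeterSystem

section Main

variable {B W : Type*} [Group W] {M : CoxeterMatrix B} (cs : CoxeterSystem M W)
  (ρ : W →* ((B →₀ ℝ) ≃ₗ[ℝ] (B →₀ ℝ)))
  (hρ : ∀ (a : B) (v : B →₀ ℝ),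
    ρ (cs.simple a) v = v - (2 * cForm M (simpleRoot a) v) • simpleRoot a)

local prefix:100 "ss" => cs.simple
local prefix:100 "ℓ" => cs.length
local prefix:100 "π" => cs.wordProd

include hρ

/-- The fundamental positivity theorem (Humphreys 5.4): if `ℓ(w sₜ) > ℓ(w)` then
`w(αₜ) > 0`. -/
theorem pos_of_not_rightDescent (w : W) (t : B) (hwt : ¬ cs.IsRightDescent w t) :
    Pos (ρ w (simpleRoot t)) := by
  classical
  generalize hn : ℓ w = n
  induction n using Nat.strong_induction_on generalizing w t with
  | _ n ih =>
  rcases eq_or_ne w 1 with rfl | hw1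
  · simpa using pos_simpleRoot t
  obtain ⟨t', ht'⟩ := cs.exists_rightDescent_of_ne_one hw1
  have htt' : t ≠ t' := fun h => hwt (h ▸ ht')
  have hlwt' : ℓ (w * ss t') + 1 = ℓ w := by
    rcases cs.length_mul_simple w t' with h | h
    · exact absurd ht' (by unfold CoxeterSystem.IsRightDescent; omega)
    · exact h
  -- minimal coset-like representative
  set P : ℕ → Prop := fun l => ∃ (v : W) (ω : List B), (∀ c ∈ ω, c = t ∨ c = t') ∧
    w = v * π ω ∧ ℓ w = ℓ v + ω.length ∧ ℓ v = l with hP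
  have hPex : ∃ l, P l := ⟨ℓ w, w, [], by simp, by simp [wordProd_nil], by simp, rfl⟩
  obtain ⟨v, ω, hlet, hvω, hlen, hlv⟩ := Nat.find_spec hPex
  have hmin : ∀ l < Nat.find hPex, ¬ P l := fun l hl => Nat.find_min hPex hl
  have hPwt' : P (ℓ (w * ss t')) := by
    refine ⟨w * ss t', [t'], by simp, ?_, ?_, rfl⟩
    · rw [wordProd_singleton, mul_assoc, cs.simple_mul_simple_self, mul_one]
    · simp; omega
  have hfind_le : Nat.find hPex ≤ ℓ (w * ss t') := Nat.find_le hPwt'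
  have hlvlt : ℓ v < n := by omega
  -- v has no right descent at t or t'
  have hvdesc : ∀ c : B, (c = t ∨ c = t') → ¬ cs.IsRightDescent v c := by
    rintro c hc hdesc
    have hlvc : ℓ (v * ss c) + 1 = ℓ v := by
      rcases cs.length_mul_simple v c with h | h
      · exact absurd hdesc (by unfold CoxeterSystem.IsRightDescent; omega)
      · exact h
    have : P (ℓ (v * ss c)) := by
      refine ⟨v * ss c, c :: ω, ?_, ?_, ?_, rfl⟩
      · intro x hx
        rcases List.mem_cons.mp hx with rfl | hx
        · exact hc
        · exact hlet x hx
      · rw [wordProd_cons, ← mul_assoc, mul_assoc v, cs.simple_mul_simple_self, mul_one,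
          hvω]
      · simp; omega
    exact hmin _ (by omega) this
  have hvt : ¬ cs.IsRightDescent v t := hvdesc t (Or.inl rfl)
  have hvt' : ¬ cs.IsRightDescent v t' := hvdesc t' (Or.inr rfl)
  have hposvt : Pos (ρ v (simpleRoot t)) := ih (ℓ v) (by omega) v t hvt rfl
  have hposvt' : Pos (ρ v (simpleRoot t')) := ih (ℓ v) (by omega) v t' hvt' rfl
  -- reduce the word ω to an alternating word
  obtain ⟨k, hkle, hkpar, hkcase⟩ := dihedral_word_reduce cs htt' ω hlet
  -- rule out the case that the alternating word ends with t
  have hcase : π ω = π (alternatingWord t t' k) ∧ (M t t' = 0 ∨ k < M t t') := by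
    have hend : ∀ k', k' + 1 ≤ ω.length → π ω = π (alternatingWord t' t (k' + 1)) → False := by
      intro k' hk'le hπω
      apply hwt
      have : w * ss t = v * π (alternatingWord t t' k') := by
        rw [hvω, hπω, alternatingWord_succ, wordProd_concat, mul_assoc, mul_assoc,
          cs.simple_mul_simple_self, mul_one]
      unfold CoxeterSystem.IsRightDescent
      calc ℓ (w * ss t) ≤ ℓ v + ℓ (π (alternatingWord t t' k')) := by
            rw [this]; exact cs.length_mul_le _ _
      _ ≤ ℓ v + k' := by
            have := cs.length_wordProd_le (alternatingWord t t' k')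
            rw [length_alternatingWord] at this; omega
      _ < ℓ w := by omega
    have hform : π ω = π (alternatingWord t t' k) := by
      rcases hkcase with h | h
      · exact h
      · rcases k with _ | k'
        · rw [h]; rfl
        · exact absurd h (fun hh => hend k' hkle hh)
    refine ⟨hform, ?_⟩
    by_cases hm0 : M t t' = 0
    · exact Or.inl hm0
    rcases lt_trichotomy k (M t t') with h | h | h
    · exact Or.inr h
    · -- k = M t t' : use the braid relation
      exfalso
      have hmpos : 1 ≤ M t t' := Nat.one_le_iff_ne_zero.mpr hm0
      have hbraid : π (alternatingWord t t' k) = π (alternatingWord t' t k) := by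
        subst h
        have := cs.wordProd_braidWord_eq t t'
        unfold CoxeterSystem.braidWord at this
        rwa [M.symmetric t' t] at this
      obtain ⟨k', rfl⟩ : ∃ k', k = k' + 1 := ⟨k - 1, by omega⟩
      exact hend k' (by omega) (hform.trans hbraid)
    · -- k > M t t' : the alternating word is not reduced
      exfalso
      have hnr := cs.not_isReduced_alternatingWord t t' hm0 h
      unfold CoxeterSystem.IsReduced at hnr
      have hlt : ℓ (π (alternatingWord t t' k)) < k := by
        have := cs.length_wordProd_le (alternatingWord t t' k)
        rw [length_alternatingWord] at this
        rw [length_alternatingWord] at hnr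
        omega
      have : ℓ w ≤ ℓ v + ℓ (π ω) := hvω ▸ cs.length_mul_le _ _
      rw [hform] at this
      omega
  obtain ⟨hform, hmk⟩ := hcase
  obtain ⟨c, p, q, hc, hp, hq, hcone⟩ := altword_cone cs ρ hρ htt' k hmk
  -- conclude
  have hmain : c • ρ w (simpleRoot t)
      = p • ρ v (simpleRoot t) + q • ρ v (simpleRoot t') := by
    rw [hvω, rho_mul_apply, hform, ← map_smul, hcone, map_add, map_smul, map_smul]
  constructor
  · intro h0
    exact (pos_simpleRoot t).1 ((LinearEquiv.map_eq_zero_iff _).mp h0)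
  · intro b
    have := congrArg (fun f => f b) hmain
    simp only [Finsupp.smul_apply, Finsupp.add_apply, smul_eq_mul] at this
    nlinarith [hposvt.2 b, hposvt'.2 b, mul_nonneg hp (hposvt.2 b),
      mul_nonneg hq (hposvt'.2 b)]

end Main

end Stmt14

namespace Stmt14

open CoxeterSystem

section Final

variable {B W : Type*} [Group W] {M : CoxeterMatrix B} (cs : CoxeterSystem M W)
  (ρ : W →* ((B →₀ ℝ) ≃ₗ[ℝ] (B →₀ ℝ)))
  (hρ : ∀ (a : B) (v : B →₀ ℝ),
    ρ (cs.simple a) v = v - (2 * cForm M (simpleRoot a) v) • simpleRoot a)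

local prefix:100 "ss" => cs.simple
local prefix:100 "ℓ" => cs.length
local prefix:100 "π" => cs.wordProd

include hρ

theorem neg_of_rightDescent (w : W) (t : B) (h : cs.IsRightDescent w t) :
    Neg (ρ w (simpleRoot t)) := by
  have h2 : ¬ cs.IsRightDescent (w * ss t) t := by
    unfold CoxeterSystem.IsRightDescent at *
    rw [mul_assoc, cs.simple_mul_simple_self, mul_one]
    omega
  have hp := pos_of_not_rightDescent cs ρ hρ (w * ss t) t h2
  rw [rho_mul_apply, refl_simpleRoot_self cs ρ hρ, map_neg] at hp
  exact neg_iff_pos_neg.mpr hp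

theorem pos_or_neg_of_isRt {β : B →₀ ℝ} (h : IsRt ρ β) : Pos β ∨ Neg β := by
  obtain ⟨v, t, rfl⟩ := h
  by_cases hd : cs.IsRightDescent v t
  · exact Or.inr (neg_of_rightDescent cs ρ hρ v t hd)
  · exact Or.inl (pos_of_not_rightDescent cs ρ hρ v t hd)

omit hρ in
lemma isRt_neg {β : B →₀ ℝ} (h : IsRt ρ β)
    (hρ' : ∀ (a : B) (v : B →₀ ℝ),
      ρ (cs.simple a) v = v - (2 * cForm M (simpleRoot a) v) • simpleRoot a) :
    IsRt ρ (-β) := by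
  obtain ⟨v, t, rfl⟩ := h
  refine ⟨v * ss t, t, ?_⟩
  rw [rho_mul_apply, refl_simpleRoot_self cs ρ hρ', map_neg]

lemma eq_simpleRoot_of_flip {γ : B →₀ ℝ} (c : B) (hpos : Pos γ) (hrt : IsRt ρ γ)
    (hneg : ¬ Pos (ρ (ss c) γ)) : γ = simpleRoot c := by
  classical
  have hrt2 : IsRt ρ (ρ (ss c) γ) := isRt_apply ρ hrt _
  have hneg2 : Neg (ρ (ss c) γ) := (pos_or_neg_of_isRt cs ρ hρ hrt2).resolve_left hneg
  have hb : ∀ b, b ≠ c → γ b = 0 := by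
    intro b hbc
    have h1 : (ρ (ss c) γ) b = γ b := refl_apply_ne cs ρ hbc γ (refl_apply cs ρ hρ c γ)
    have h2 := hneg2.2 b
    have h3 := hpos.2 b
    rw [h1] at h2
    linarith
  have hγ : γ = Finsupp.single c (γ c) := by
    ext b
    by_cases hbc : b = c
    · subst hbc; simp
    · rw [hb b hbc, Finsupp.single_apply, if_neg (fun h => hbc h.symm)]
  have hbf : BF M γ γ = 1 := bf_root cs ρ hρ hrt
  rw [hγ, BF_single_single, kk_diag, mul_one] at hbf
  have hγc : γ c = 1 := by
    have h0 : 0 ≤ γ c := hpos.2 c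
    nlinarith
  rw [hγ, hγc]; rfl

lemma finite_inversions (w : W) :
    {β : B →₀ ℝ | Pos β ∧ IsRt ρ β ∧ Neg (ρ w β)}.Finite := by
  classical
  obtain ⟨ω, hred, rfl⟩ := cs.exists_reduced_word' w
  apply Set.Finite.subset (Set.finite_range (fun j : Fin ω.length =>
    ρ (π (ω.drop (j.1 + 1)))⁻¹ (simpleRoot (ω.get j))))
  rintro β ⟨hpos, hrt, hneg⟩
  have hQex : ∃ j, Pos (ρ (π (List.drop j ω)) β) := by
    refine ⟨ω.length, ?_⟩
    rw [List.drop_length, wordProd_nil, map_one]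
    simpa using hpos
  have hj₀ := Nat.find_spec hQex
  have hQ0 : ¬ Pos (ρ (π (List.drop 0 ω)) β) := by
    rw [List.drop_zero]
    exact fun hp => not_pos_and_neg hp hneg
  have hj₀pos : 0 < Nat.find hQex :=
    Nat.pos_of_ne_zero (fun h => hQ0 (by rw [← h]; exact hj₀))
  have hj₀le : Nat.find hQex ≤ ω.length := Nat.find_le (by
    rw [List.drop_length, wordProd_nil, map_one]
    simpa using hpos)
  have hjlt : Nat.find hQex - 1 < ω.length := by omega
  have hnotQ : ¬ Pos (ρ (π (List.drop (Nat.find hQex - 1) ω)) β) :=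
    Nat.find_min hQex (by omega)
  have hdrop : List.drop (Nat.find hQex - 1) ω
      = ω.get ⟨Nat.find hQex - 1, hjlt⟩ :: List.drop (Nat.find hQex - 1 + 1) ω := by
    rw [List.drop_eq_getElem_cons hjlt]
    rfl
  have hidx : Nat.find hQex - 1 + 1 = Nat.find hQex := by omega
  set γ := ρ (π (List.drop (Nat.find hQex - 1 + 1) ω)) β with hγdef
  have hγpos : Pos γ := by rw [hγdef, hidx]; exact hj₀
  have hγrt : IsRt ρ γ := isRt_apply ρ hrt _
  have hnp : ¬ Pos (ρ (ss (ω.get ⟨Nat.find hQex - 1, hjlt⟩)) γ) := by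
    intro hp
    apply hnotQ
    rw [hdrop, wordProd_cons, rho_mul_apply]
    exact hp
  have hγ := eq_simpleRoot_of_flip cs ρ hρ _ hγpos hγrt hnp
  refine ⟨⟨Nat.find hQex - 1, hjlt⟩, ?_⟩
  show ρ (π (List.drop (Nat.find hQex - 1 + 1) ω))⁻¹ (simpleRoot _) = β
  rw [← hγ, hγdef, ← rho_mul_apply, inv_mul_cancel, map_one]
  simp

omit hρ in
lemma roots_infinite (hinf : Infinite W)
    (hρ' : ∀ (a : B) (v : B →₀ ℝ),
      ρ (cs.simple a) v = v - (2 * cForm M (simpleRoot a) v) • simpleRoot a) :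
    {β : B →₀ ℝ | IsRt ρ β}.Infinite := by
  intro hfin
  haveI := hfin.to_subtype
  set f : W → ({β : B →₀ ℝ | IsRt ρ β} → {β : B →₀ ℝ | IsRt ρ β}) :=
    fun w β => ⟨ρ w β.1, isRt_apply ρ β.2 w⟩ with hf
  have hinj : Function.Injective f := by
    intro w1 w2 h
    have key : ∀ t : B, ρ w1 (simpleRoot t) = ρ w2 (simpleRoot t) := by
      intro t
      have := congrFun h ⟨simpleRoot t, isRt_simpleRoot ρ t⟩
      exact congrArg Subtype.val this
    have h1 : w2⁻¹ * w1 = 1 := by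
      by_contra h1
      obtain ⟨t, ht⟩ := cs.exists_rightDescent_of_ne_one h1
      have hneg := neg_of_rightDescent cs ρ hρ' _ t ht
      have : ρ (w2⁻¹ * w1) (simpleRoot t) = simpleRoot t := by
        rw [rho_mul_apply, key t, ← rho_mul_apply, inv_mul_cancel, map_one]
        simp
      rw [this] at hneg
      exact not_pos_and_neg (pos_simpleRoot t) hneg
    exact (inv_mul_eq_one.mp h1).symm
  haveI : Finite W := Finite.of_injective f hinj
  exact not_finite W

omit hρ in
lemma posroots_infinite (hinf : Infinite W)
    (hρ' : ∀ (a : B) (v : B →₀ ℝ),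
      ρ (cs.simple a) v = v - (2 * cForm M (simpleRoot a) v) • simpleRoot a) :
    {β : B →₀ ℝ | Pos β ∧ IsRt ρ β}.Infinite := by
  intro hfin
  apply roots_infinite cs ρ hinf hρ'
  apply Set.Finite.subset (hfin.union (hfin.image (fun v => -v)))
  intro β hβ
  rcases pos_or_neg_of_isRt cs ρ hρ' hβ with hp | hn
  · exact Or.inl ⟨hp, hβ⟩
  · exact Or.inr ⟨-β, ⟨neg_iff_pos_neg.mp hn, isRt_neg cs ρ hβ hρ'⟩, by simp⟩

lemma push_step {β : B →₀ ℝ} {x y : B} (hpos : Pos β) (hxy : x ≠ y)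
    (hM : M x y ≠ 2) (hx : 0 < β x) (hy : β y = 0) :
    Pos (ρ (ss y) β) ∧ 0 < (ρ (ss y) β) y ∧ ∀ b, b ≠ y → (ρ (ss y) β) b = β b := by
  classical
  have hcoord : ∀ b, b ≠ y → (ρ (ss y) β) b = β b :=
    fun b hb => refl_apply_ne cs ρ hb β (refl_apply cs ρ hρ y β)
  have hBF : BF M (simpleRoot y) β < 0 := by
    rw [BF_simpleRoot_apply]
    have hxs : x ∈ β.support := Finsupp.mem_support_iff.mpr hx.ne'
    rw [Finsupp.sum, ← Finset.add_sum_erase _ _ hxs]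
    have h1 : β x * kk M y x < 0 := by
      apply mul_neg_of_pos_of_neg hx
      have := kk_le_neg_half M (Ne.symm hxy) (by rw [M.symmetric]; exact hM)
      linarith
    have h2 : ∑ b ∈ β.support.erase x, β b * kk M y b ≤ 0 := by
      apply Finset.sum_nonpos
      intro b hb
      by_cases hby : b = y
      · subst hby; rw [hy]; simp
      · exact mul_nonpos_of_nonneg_of_nonpos (hpos.2 b)
          (kk_nonpos M (fun h => hby h.symm))
    linarith
  have hyc : (ρ (ss y) β) y = β y - 2 * BF M (simpleRoot y) β := by
    rw [refl_apply cs ρ hρ, Finsupp.sub_apply, Finsupp.smul_apply]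
    rw [simpleRoot, Finsupp.single_eq_same, smul_eq_mul, mul_one]
  have hypos : 0 < (ρ (ss y) β) y := by rw [hyc, hy]; linarith
  refine ⟨⟨?_, ?_⟩, hypos, hcoord⟩
  · intro h0
    rw [h0] at hypos
    simp at hypos
  · intro b
    by_cases hb : b = y
    · subst hb; linarith
    · rw [hcoord b hb]; exact hpos.2 b

lemma push_chain {x s₀ : B}
    (hx : Relation.ReflTransGen (fun a b => a ≠ b ∧ M a b ≠ 2) x s₀) :
    ∃ 𝒱 : Finset W, ∀ β : B →₀ ℝ, Pos β → IsRt ρ β → 0 < β x →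
      ∃ v ∈ 𝒱, Pos (ρ v β) ∧ IsRt ρ (ρ v β) ∧ 0 < (ρ v β) s₀ := by
  classical
  induction hx using Relation.ReflTransGen.head_induction_on with
  | refl =>
    refine ⟨{1}, fun β hp hr hx => ⟨1, Finset.mem_singleton_self 1, ?_⟩⟩
    rw [map_one]
    simpa using ⟨hp, hr, hx⟩
  | @head a c hac hcs ih =>
    obtain ⟨𝒱', h𝒱'⟩ := ih
    refine ⟨𝒱' ∪ 𝒱'.image (· * ss c), fun β hp hr hxa => ?_⟩
    by_cases hc0 : β c = 0
    · have hps := push_step cs ρ hρ hp hac.1 hac.2 hxa hc0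
      obtain ⟨v', hv', hres⟩ := h𝒱' (ρ (ss c) β) hps.1 (isRt_apply ρ hr _) hps.2.1
      refine ⟨v' * ss c, Finset.mem_union_right _ (Finset.mem_image_of_mem _ hv'), ?_⟩
      rw [rho_mul_apply]
      exact hres
    · have hcpos : 0 < β c := lt_of_le_of_ne (hp.2 c) (Ne.symm hc0)
      obtain ⟨v', hv', hres⟩ := h𝒱' β hp hr hcpos
      exact ⟨v', Finset.mem_union_left _ hv', hres⟩

/-- Deodhar-type lemma: for an irreducible infinite Coxeter system, there are
infinitely many positive roots with positive `s₀`-coordinate. -/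
lemma D_infinite
    (hirr : ∀ a b : B, Relation.ReflTransGen (fun a b => a ≠ b ∧ M a b ≠ 2) a b)
    (hinf : Infinite W) (s₀ : B) :
    {β : B →₀ ℝ | Pos β ∧ IsRt ρ β ∧ 0 < β s₀}.Infinite := by
  classical
  intro hDfin
  -- the set of supports is finite, hence B is finite
  have hK : (⋃ β ∈ {β : B →₀ ℝ | Pos β ∧ IsRt ρ β ∧ 0 < β s₀},
      (β.support : Set B)).Finite :=
    Set.Finite.biUnion hDfin (fun β _ => (β.support : Set B).toFinite)
  set K := ⋃ β ∈ {β : B →₀ ℝ | Pos β ∧ IsRt ρ β ∧ 0 < β s₀}, (β.support : Set B)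
    with hKdef
  have hsK : s₀ ∈ K := by
    have hroot : simpleRoot s₀ ∈ {β : B →₀ ℝ | Pos β ∧ IsRt ρ β ∧ 0 < β s₀} :=
      ⟨pos_simpleRoot s₀, isRt_simpleRoot ρ s₀, by simp [simpleRoot]⟩
    have hmem : s₀ ∈ ((simpleRoot s₀).support : Set B) := by simp [simpleRoot]
    exact Set.mem_biUnion hroot hmem
  have hclosed : ∀ a b : B, a ∈ K → a ≠ b → M a b ≠ 2 → b ∈ K := by
    intro a b haK hab hM
    obtain ⟨β, hβ, ha⟩ := Set.mem_iUnion₂.mp haK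
    have hβa : 0 < β a := lt_of_le_of_ne (hβ.1.2 a)
      (Ne.symm (Finsupp.mem_support_iff.mp ha))
    by_cases hb0 : β b = 0
    · have hps := push_step cs ρ hρ hβ.1 hab hM hβa hb0
      have hmem : ρ (ss b) β ∈ {β : B →₀ ℝ | Pos β ∧ IsRt ρ β ∧ 0 < β s₀} := by
        refine ⟨hps.1, isRt_apply ρ hβ.2.1 _, ?_⟩
        by_cases hbs : b = s₀
        · subst hbs; exact hps.2.1
        · rw [hps.2.2 s₀ (fun h => hbs h.symm)]; exact hβ.2.2
      exact Set.mem_biUnion hmem (Finsupp.mem_support_iff.mpr hps.2.1.ne')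
    · exact Set.mem_biUnion hβ (Finsupp.mem_support_iff.mpr hb0)
  have hKuniv : ∀ b, b ∈ K := by
    intro b
    have h := hirr s₀ b
    clear hKdef
    induction h with
    | refl => exact hsK
    | tail hRT hedge ih => exact hclosed _ _ ih hedge.1 hedge.2
  haveI hBfin : Finite B := by
    rw [← Set.finite_univ_iff]
    exact hK.subset (fun b _ => hKuniv b)
  -- infinitely many positive roots outside D
  have hE : ({β : B →₀ ℝ | Pos β ∧ IsRt ρ β}
      \ {β : B →₀ ℝ | Pos β ∧ IsRt ρ β ∧ 0 < β s₀}).Infinite :=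
    (posroots_infinite cs ρ hinf hρ).diff hDfin
  set E := {β : B →₀ ℝ | Pos β ∧ IsRt ρ β}
    \ {β : B →₀ ℝ | Pos β ∧ IsRt ρ β ∧ 0 < β s₀} with hEdef
  have hpigeon : ∃ x : B, {β ∈ E | 0 < β x}.Infinite := by
    by_contra hall
    push_neg at hall
    apply hE
    apply Set.Finite.subset (Set.Finite.biUnion (Set.finite_univ (α := B))
      (fun x _ => hall x))
    intro β hβ
    obtain ⟨x, hx⟩ := Finsupp.support_nonempty_iff.mpr hβ.1.1.1
    exact Set.mem_biUnion (Set.mem_univ x)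
      ⟨hβ, lt_of_le_of_ne (hβ.1.1.2 x) (Ne.symm (Finsupp.mem_support_iff.mp hx))⟩
  obtain ⟨x, hxinf⟩ := hpigeon
  obtain ⟨𝒱, h𝒱⟩ := push_chain cs ρ hρ (hirr x s₀)
  apply hxinf
  apply Set.Finite.subset (Set.Finite.biUnion (𝒱 : Set W).toFinite
    (fun v _ => hDfin.preimage ((ρ v).injective.injOn)))
  rintro β ⟨hβE, hβx⟩
  obtain ⟨v, hv, hres⟩ := h𝒱 β hβE.1.1 hβE.1.2 hβx
  exact Set.mem_biUnion hv hres

end Final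

end Stmt14

namespace Stmt14

open CoxeterSystem

section Assemble

variable {B W : Type*} [Group W] {M : CoxeterMatrix B} (cs : CoxeterSystem M W)
  (ρ : W →* ((B →₀ ℝ) ≃ₗ[ℝ] (B →₀ ℝ)))
  (hρ : ∀ (a : B) (v : B →₀ ℝ),
    ρ (cs.simple a) v = v - (2 * cForm M (simpleRoot a) v) • simpleRoot a)

local prefix:100 "ss" => cs.simple
local prefix:100 "ℓ" => cs.length

include hρ

/-- The key lemma: an element whose action sends every `α_t` (`t ≠ s₀`) to a positive
vector with vanishing `s₀`-coordinate must be the identity. -/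
theorem eq_one_of_fix
    (hirr : ∀ a b : B, Relation.ReflTransGen (fun a b => a ≠ b ∧ M a b ≠ 2) a b)
    (hinf : Infinite W) (s₀ : B) (w : W)
    (hw : ∀ t, t ≠ s₀ → Pos (ρ w (simpleRoot t)) ∧ (ρ w (simpleRoot t)) s₀ = 0) :
    w = 1 := by
  classical
  by_contra hw1
  obtain ⟨t₀, ht₀⟩ := cs.exists_rightDescent_of_ne_one hw1
  have hneg := neg_of_rightDescent cs ρ hρ w t₀ ht₀
  have ht₀s : t₀ = s₀ := by
    by_contra h
    exact not_pos_and_neg (hw t₀ h).1 hneg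
  subst ht₀s
  have hδs_ne : (ρ w (simpleRoot t₀)) t₀ ≠ 0 := by
    intro h0
    have hall : ∀ t, (ρ w (simpleRoot t)) t₀ = 0 := by
      intro t
      by_cases ht : t = t₀
      · subst ht; exact h0
      · exact (hw t ht).2
    set x := (ρ w).symm (simpleRoot t₀) with hxdef
    have hx : ρ w x = simpleRoot t₀ := LinearEquiv.apply_symm_apply _ _
    have h1 : (ρ w x) t₀ = 1 := by rw [hx]; simp [simpleRoot]
    have h2 : (ρ w x) t₀ = 0 := by
      rw [expand_apply ρ w x, Finsupp.sum_apply, Finsupp.sum]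
      simp only [Finsupp.smul_apply, smul_eq_mul]
      apply Finset.sum_eq_zero
      intro t _
      rw [hall t, mul_zero]
    rw [h2] at h1
    norm_num at h1
  have hδs : (ρ w (simpleRoot t₀)) t₀ < 0 := lt_of_le_of_ne (hneg.2 t₀) hδs_ne
  have hsub : {β : B →₀ ℝ | Pos β ∧ IsRt ρ β ∧ 0 < β t₀}
      ⊆ {β : B →₀ ℝ | Pos β ∧ IsRt ρ β ∧ Neg (ρ w β)} := by
    rintro β ⟨hp, hr, hβs⟩
    refine ⟨hp, hr, ?_⟩
    have hcoord : (ρ w β) t₀ < 0 := by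
      rw [expand_apply ρ w β, Finsupp.sum_apply, Finsupp.sum]
      simp only [Finsupp.smul_apply, smul_eq_mul]
      have hsupp : t₀ ∈ β.support := Finsupp.mem_support_iff.mpr hβs.ne'
      rw [← Finset.add_sum_erase _ _ hsupp]
      have hrest : ∑ b ∈ β.support.erase t₀, β b * (ρ w (simpleRoot b)) t₀ = 0 := by
        apply Finset.sum_eq_zero
        intro b hb
        rw [(hw b (Finset.ne_of_mem_erase hb)).2, mul_zero]
      rw [hrest, add_zero]
      exact mul_neg_of_pos_of_neg hβs hδs
    have hrt2 : IsRt ρ (ρ w β) := isRt_apply ρ hr w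
    rcases pos_or_neg_of_isRt cs ρ hρ hrt2 with hpw | hnw
    · exact absurd (hpw.2 t₀) (by linarith)
    · exact hnw
  exact D_infinite cs ρ hρ hirr hinf t₀ ((finite_inversions cs ρ hρ w).subset hsub)

/-- Elements of the standard parabolic subgroup move vectors only within the span of
the corresponding simple roots. -/
lemma parabolic_span (s₀ : B) (g : W)
    (hg : g ∈ Subgroup.closure (cs.simple '' (Set.univ \ {s₀}))) :
    ∀ x : B →₀ ℝ, (ρ g x - x) s₀ = 0 := by
  classical
  induction hg using Subgroup.closure_induction with
  | mem g hgmem =>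
    obtain ⟨t, ht, rfl⟩ := hgmem
    have hts : t ≠ s₀ := by simpa using ht
    intro x
    rw [refl_apply cs ρ hρ t x]
    simp only [sub_sub_cancel_left, Finsupp.neg_apply, Finsupp.smul_apply]
    rw [simpleRoot, Finsupp.single_apply, if_neg (fun h => hts h), smul_zero, neg_zero]
  | one => intro x; simp
  | mul g h hgc hhc ihg ihh =>
    intro x
    have h1 := ihg (ρ h x)
    have h2 := ihh x
    rw [rho_mul_apply]
    have : ρ g (ρ h x) - x = (ρ g (ρ h x) - ρ h x) + (ρ h x - x) := by abel
    rw [this, Finsupp.add_apply, h1, h2, add_zero]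
  | inv g hgc ihg =>
    intro x
    have h1 := ihg (ρ g⁻¹ x)
    have : ρ g (ρ g⁻¹ x) = x := by
      rw [← rho_mul_apply, mul_inv_cancel, map_one]; simp
    rw [this] at h1
    have : ρ g⁻¹ x - x = -(x - ρ g⁻¹ x) := by abel
    rw [this, Finsupp.neg_apply, h1, neg_zero]

end Assemble

end Stmt14

theorem stmt_14' {B W : Type*} [Group W] {M : CoxeterMatrix B}
    (cs : CoxeterSystem M W)
    (hirr : ∀ s t : B, Relation.ReflTransGen (fun a b => a ≠ b ∧ M a b ≠ 2) s t)
    (hinf : Infinite W)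
    (ρ : W →* ((B →₀ ℝ) ≃ₗ[ℝ] (B →₀ ℝ)))
    (hρ : ∀ (s : B) (v : B →₀ ℝ),
      ρ (cs.simple s) v = v - (2 * cForm M (simpleRoot s) v) • simpleRoot s)
    (s : B) :
    {w : W | (fun v => ρ w v) '' (simpleRoot '' (Set.univ \ {s})) =
        simpleRoot '' (Set.univ \ {s})} = {1} ∧
    Subgroup.normalizer (Subgroup.closure (cs.simple '' (Set.univ \ {s}))) =
      Subgroup.closure (cs.simple '' (Set.univ \ {s})) := by
  classical
  open Stmt14 in
  constructor
  · -- N_I = {1}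
    ext w
    simp only [Set.mem_setOf_eq, Set.mem_singleton_iff]
    constructor
    · intro hset
      apply Stmt14.eq_one_of_fix cs ρ hρ hirr hinf s w
      intro t hts
      have hmem : simpleRoot t ∈ simpleRoot '' (Set.univ \ {s}) :=
        ⟨t, ⟨Set.mem_univ t, by simpa using hts⟩, rfl⟩
      have : ρ w (simpleRoot t) ∈ simpleRoot '' (Set.univ \ {s}) := by
        rw [← hset]
        exact Set.mem_image_of_mem _ hmem
      obtain ⟨t', ht', heq⟩ := this
      have ht's : t' ≠ s := by simpa using ht'.2
      constructor
      · rw [← heq]; exact Stmt14.pos_simpleRoot t'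
      · rw [← heq, simpleRoot, Finsupp.single_apply, if_neg (fun h => ht's h)]
    · rintro rfl
      rw [map_one]
      have : (fun v : B →₀ ℝ => (1 : (B →₀ ℝ) ≃ₗ[ℝ] (B →₀ ℝ)) v) = id := by
        funext v; simp
      rw [this, Set.image_id]
  · -- normalizer
    apply le_antisymm
    · intro w hw
      set G := Subgroup.closure (cs.simple '' (Set.univ \ {s})) with hGdef
      have hPex : ∃ n, ∃ u ∈ G, cs.length (w * u) = n := ⟨cs.length w, 1, one_mem G, by simp⟩
      obtain ⟨u₀, hu₀G, hu₀len⟩ := Nat.find_spec hPex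
      set v := w * u₀ with hvdef
      have hvnorm : v ∈ Subgroup.normalizer G :=
        mul_mem hw (Subgroup.le_normalizer hu₀G)
      have hvd : ∀ t, t ≠ s → ¬ cs.IsRightDescent v t := by
        intro t hts hdesc
        have hsimple : cs.simple t ∈ G := by
          apply Subgroup.subset_closure
          exact ⟨t, ⟨Set.mem_univ t, by simpa using hts⟩, rfl⟩
        have : ∃ u ∈ G, cs.length (w * u) = cs.length (v * cs.simple t) :=
          ⟨u₀ * cs.simple t, mul_mem hu₀G hsimple, by rw [← mul_assoc, ← hvdef]⟩
        have hlt : cs.length (v * cs.simple t) < Nat.find hPex := by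
          unfold CoxeterSystem.IsRightDescent at hdesc
          omega
        exact Nat.find_min hPex hlt ⟨u₀ * cs.simple t, mul_mem hu₀G hsimple,
          by rw [← mul_assoc, ← hvdef]⟩
      have hv1 : v = 1 := by
        apply Stmt14.eq_one_of_fix cs ρ hρ hirr hinf s v
        intro t hts
        refine ⟨Stmt14.pos_of_not_rightDescent cs ρ hρ v t (hvd t hts), ?_⟩
        have hconj : v * cs.simple t * v⁻¹ ∈ G := by
          have := Subgroup.mem_normalizer_iff.mp hvnorm
          exact (this (cs.simple t)).mp (by
            apply Subgroup.subset_closure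
            exact ⟨t, ⟨Set.mem_univ t, by simpa using hts⟩, rfl⟩)
        have hspan := Stmt14.parabolic_span cs ρ hρ s (v * cs.simple t * v⁻¹) hconj
          (ρ v (simpleRoot t))
        have hact : ρ (v * cs.simple t * v⁻¹) (ρ v (simpleRoot t))
            = - ρ v (simpleRoot t) := by
          rw [Stmt14.rho_mul_apply ρ, Stmt14.rho_mul_apply ρ]
          have : ρ v⁻¹ (ρ v (simpleRoot t)) = simpleRoot t := by
            rw [← Stmt14.rho_mul_apply ρ, inv_mul_cancel, map_one]; simp
          rw [this, Stmt14.refl_simpleRoot_self cs ρ hρ, map_neg]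
        rw [hact] at hspan
        have : (- ρ v (simpleRoot t) - ρ v (simpleRoot t)) s
            = -2 * (ρ v (simpleRoot t)) s := by
          rw [Finsupp.sub_apply, Finsupp.neg_apply]; ring
        rw [this] at hspan
        linarith
      have : w = u₀⁻¹ := by
        rw [← mul_one w, ← mul_inv_cancel u₀, ← mul_assoc, ← hvdef, hv1, one_mul]
      rw [this]
      exact inv_mem hu₀G
    · exact Subgroup.le_normalizer

/-- For an irreducible infinite Coxeter system, `s ∈ S` and
`I = S ∖ {s}`: the set `N_I = {w | w · Π_I = Π_I}` is trivial, and the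
normalizer of `W_I` equals `W_I`. -/
theorem stmt_14 {B W : Type*} [Group W] {M : CoxeterMatrix B}
    (cs : CoxeterSystem M W)
    (hirr : ∀ s t : B, Relation.ReflTransGen (fun a b => a ≠ b ∧ M a b ≠ 2) s t)
    (hinf : Infinite W)
    (ρ : W →* ((B →₀ ℝ) ≃ₗ[ℝ] (B →₀ ℝ)))
    (hρ : ∀ (s : B) (v : B →₀ ℝ),
      ρ (cs.simple s) v = v - (2 * cForm M (simpleRoot s) v) • simpleRoot s)
    (s : B) :
    {w : W | (fun v => ρ w v) '' (simpleRoot '' (Set.univ \ {s})) =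
        simpleRoot '' (Set.univ \ {s})} = {1} ∧
    Subgroup.normalizer (Subgroup.closure (cs.simple '' (Set.univ \ {s}))) =
      Subgroup.closure (cs.simple '' (Set.univ \ {s})) :=
  stmt_14' cs hirr hinf ρ hρ s
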